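/- Every closed subgroup G of (ℤ^(ω))^ω is topologically isomorphic to ℤ^α × (ℤ^(ω))^β for some α, β ≤ ω. -/

import Mathlib

/-- `ℤ^(ω)`: the free abelian group `⨁_{n ∈ ℕ} ℤ`, equipped with the discrete topology. -/
def ZOmega : Type := ℕ →₀ ℤ

noncomputable instance : AddCommGroup ZOmega := inferInstanceAs (AddCommGroup (ℕ →₀ ℤ))
instance : Countable ZOmega := inferInstanceAs (Countable (ℕ →₀ ℤ))
instance : TopologicalSpace ZOmega := ⊥
instance : DiscreteTopology ZOmega := ⟨rfl⟩
instance : IsTopologicalAddGroup ZOmega where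
  continuous_add := continuous_of_discreteTopology
  continuous_neg := continuous_of_discreteTopology


open Submodule Set

-- leading-coefficient ideal at position m
noncomputable def Dm (N : Submodule ℤ (ℕ →₀ ℤ)) (m : ℕ) : Submodule ℤ ℤ :=
  (N ⊓ Finsupp.supported ℤ ℤ (Set.Iic m)).map (Finsupp.lapply m)

theorem exists_basis_submodule (N : Submodule ℤ (ℕ →₀ ℤ)) :
    ∃ (J : Set ℕ) (v : J → (ℕ →₀ ℤ)),
      (∀ j, v j ∈ N) ∧ LinearIndependent ℤ v ∧ Submodule.span ℤ (Set.range v) = N := by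
  classical
  haveI : ∀ m, (Dm N m).IsPrincipal := fun m => IsPrincipalIdealRing.principal _
  set d : ℕ → ℤ := fun m => Submodule.IsPrincipal.generator (Dm N m) with hd
  set J : Set ℕ := {m | Dm N m ≠ ⊥} with hJ
  have hdJ : ∀ m ∈ J, d m ≠ 0 := by
    intro m hm hzero
    exact hm ((Submodule.IsPrincipal.eq_bot_iff_generator_eq_zero _).2 hzero)
  have hgen : ∀ m, d m ∈ Dm N m := fun m => Submodule.IsPrincipal.generator_mem _
  -- choose witnesses
  have hex : ∀ m ∈ J, ∃ x, (x ∈ N ∧ x ∈ Finsupp.supported ℤ ℤ (Set.Iic m)) ∧ x m = d m := by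
    intro m _
    rcases (Submodule.mem_map).1 (hgen m) with ⟨x, hx, hxm⟩
    exact ⟨x, Submodule.mem_inf.1 hx, hxm⟩
  choose v hv using fun (j : J) => hex j j.2
  refine ⟨J, v, fun j => (hv j).1.1, ?_, ?_⟩
  · -- linear independence
    rw [linearIndependent_iff']
    intro s g hsum i hi
    by_contra hgi
    have hne : (s.filter (fun j => g j ≠ 0)).Nonempty := ⟨i, Finset.mem_filter.2 ⟨hi, hgi⟩⟩
    obtain ⟨j, hjt, hjmax⟩ := Finset.exists_max_image _ (fun j : J => (j : ℕ)) hne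
    have hjs : j ∈ s := (Finset.mem_filter.1 hjt).1
    have hgj : g j ≠ 0 := (Finset.mem_filter.1 hjt).2
    have h0 : (∑ k ∈ s, g k • v k) (j : ℕ) = 0 := by rw [hsum]; rfl
    rw [Finsupp.finset_sum_apply] at h0
    have hsingle : ∑ k ∈ s, (g k • v k) (j : ℕ) = g j * d (j : ℕ) := by
      rw [Finset.sum_eq_single j]
      · rw [Finsupp.smul_apply, (hv j).2, smul_eq_mul]
      · intro b hb hbj
        rcases eq_or_ne (g b) 0 with h | h
        · simp [h]
        · have hble : (b : ℕ) ≤ (j : ℕ) := hjmax b (Finset.mem_filter.2 ⟨hb, h⟩)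
          have hblt : (b : ℕ) < (j : ℕ) :=
            lt_of_le_of_ne hble (fun hc => hbj (Subtype.ext hc))
          have hsupp : ↑(v b).support ⊆ Set.Iic (b : ℕ) :=
            (Finsupp.mem_supported ℤ _).1 (hv b).1.2
          have : v b (j : ℕ) = 0 := by
            by_contra hvb
            exact absurd (hsupp (Finsupp.mem_support_iff.2 hvb)) (not_le.2 hblt)
          simp [this]
      · intro h; exact absurd hjs h
    rw [hsingle] at h0
    exact hgj (by
      rcases mul_eq_zero.1 h0 with h | h
      · exact h
      · exact absurd h (hdJ _ j.2))
  · -- span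
    apply le_antisymm
    · rw [Submodule.span_le]
      rintro _ ⟨j, rfl⟩
      exact (hv j).1.1
    · intro x hx
      obtain ⟨n, hn⟩ : ∃ n, ↑x.support ⊆ Set.Iio n :=
        ⟨x.support.sup id + 1, fun k hk =>
          Nat.lt_succ_of_le (Finset.le_sup (f := id) (Finset.mem_coe.1 hk))⟩
      induction n generalizing x with
      | zero =>
        have hx0 : x = 0 := by
          ext k
          by_contra h
          exact absurd (hn (Finsupp.mem_support_iff.2 h)) (Nat.not_lt_zero k)
        rw [hx0]; exact Submodule.zero_mem _
      | succ n ih =>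
        have hxic : x ∈ Finsupp.supported ℤ ℤ (Set.Iic n) := by
          rw [Finsupp.mem_supported]
          intro k hk
          exact Nat.lt_succ_iff.1 (hn hk)
        rcases eq_or_ne (x n) 0 with hx0 | hx0
        · refine ih hx (fun k hk => ?_)
          have h1 : k ≤ n := Nat.lt_succ_iff.1 (hn hk)
          have h2 : k ≠ n := by rintro rfl; exact (Finsupp.mem_support_iff.1 hk) hx0
          exact lt_of_le_of_ne h1 h2
        · have hmem : x n ∈ Dm N n := Submodule.mem_map.2 ⟨x, Submodule.mem_inf.2 ⟨hx, hxic⟩, rfl⟩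
          have hnJ : n ∈ J := by
            intro hbot
            rw [hbot, Submodule.mem_bot] at hmem
            exact hx0 hmem
          obtain ⟨a, ha⟩ := (Submodule.IsPrincipal.mem_iff_eq_smul_generator _).1 hmem
          set j : J := ⟨n, hnJ⟩ with hjdef
          have hvj := hv j
          have hy : x - a • v j ∈ N := N.sub_mem hx (N.smul_mem a hvj.1.1)
          have hysupp : ↑(x - a • v j).support ⊆ Set.Iio n := by
            intro k hk
            rw [Finset.mem_coe, Finsupp.mem_support_iff] at hk
            by_contra hkn
            rw [Set.mem_Iio, not_lt] at hkn
            apply hk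
            rcases Nat.lt_or_ge k (n + 1) with h | h
            · have hkn' : k = n := le_antisymm (Nat.lt_succ_iff.1 h) hkn
              subst hkn'
              have hvjk : v j (k : ℕ) = d k := hvj.2
              simp [Finsupp.sub_apply, Finsupp.smul_apply, hvjk, ha, hd]
            · have hxk : x k = 0 := by
                by_contra h'
                exact absurd (hn (Finsupp.mem_support_iff.2 h')) (not_lt.2 h)
              have hvk : v j k = 0 := by
                by_contra h'
                have := (Finsupp.mem_supported ℤ _).1 hvj.1.2 (Finsupp.mem_support_iff.2 h')
                simp only [Set.mem_Iic] at this
                have hjn : (j : ℕ) = n := rfl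
                omega
              simp [Finsupp.sub_apply, hxk, hvk]
          have hxeq : x = (x - a • v j) + a • v j := by abel
          rw [hxeq]
          exact Submodule.add_mem _ (ih hy hysupp)
            (Submodule.smul_mem _ _ (Submodule.subset_span ⟨j, rfl⟩))

noncomputable section Core

instance finsuppTop (α : Type*) : TopologicalSpace (α →₀ ℤ) := ⊥
instance finsuppDiscrete (α : Type*) : DiscreteTopology (α →₀ ℤ) := ⟨rfl⟩

namespace CSPF

variable (G : AddSubgroup (ℕ → (ℕ →₀ ℤ)))

/-- the basic open subgroups of the ambient product -/
def Un (n : ℕ) : AddSubgroup (ℕ → (ℕ →₀ ℤ)) where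
  carrier := {x | ∀ m, m < n → x m = 0}
  add_mem' := by intro a b ha hb m hm; simp [Pi.add_apply, ha m hm, hb m hm]
  zero_mem' := by intro m _; rfl
  neg_mem' := by intro a ha m hm; simp [Pi.neg_apply, ha m hm]

theorem Un_isOpen (n : ℕ) : IsOpen ((Un n : Set (ℕ → (ℕ →₀ ℤ)))) := by
  have : (Un n : Set (ℕ → (ℕ →₀ ℤ)))
      = (fun x : ℕ → (ℕ →₀ ℤ) => fun m : Fin n => x m) ⁻¹' {fun _ => 0} := by
    ext x
    constructor
    · intro hx; funext m; exact hx m m.2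
    · intro hx m hm
      exact congrFun hx ⟨m, hm⟩
  rw [this]
  exact (isOpen_discrete _).preimage (by continuity)

def Gn (n : ℕ) : AddSubgroup (ℕ → (ℕ →₀ ℤ)) := G ⊓ Un n

theorem Gn_anti {m n : ℕ} (h : m ≤ n) : Gn G n ≤ Gn G m := by
  intro x hx
  exact ⟨hx.1, fun k hk => hx.2 k (lt_of_lt_of_le hk h)⟩

def Gn' (n : ℕ) : Submodule ℤ (ℕ → (ℕ →₀ ℤ)) where
  carrier := Gn G n
  add_mem' := by intro a b ha hb; exact add_mem ha hb
  zero_mem' := zero_mem _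
  smul_mem' := by
    intro c x hx
    have h := AddSubgroup.zsmul_mem (Gn G n) hx c
    rwa [← Int.cast_smul_eq_zsmul ℤ c x, Int.cast_id] at h

theorem mem_Gn' {n : ℕ} {x} : x ∈ Gn' G n ↔ x ∈ Gn G n := Iff.rfl

/-- the image of `Gn` under the `n`-th coordinate projection -/
def Hn (n : ℕ) : Submodule ℤ (ℕ →₀ ℤ) := (Gn' G n).map (LinearMap.proj n)

end CSPF

end Core

namespace CSPF

variable (G : AddSubgroup (ℕ → (ℕ →₀ ℤ)))

noncomputable def Jn (n : ℕ) : Set ℕ := (exists_basis_submodule (Hn G n)).choose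

noncomputable def vb (n : ℕ) : Jn G n → (ℕ →₀ ℤ) :=
  (exists_basis_submodule (Hn G n)).choose_spec.choose

theorem vb_spec (n : ℕ) : (∀ j, vb G n j ∈ Hn G n) ∧ LinearIndependent ℤ (vb G n) ∧
    Submodule.span ℤ (Set.range (vb G n)) = Hn G n :=
  (exists_basis_submodule (Hn G n)).choose_spec.choose_spec

noncomputable def bas (n : ℕ) : Module.Basis (Jn G n) ℤ (Hn G n) :=
  (Module.Basis.span (vb_spec G n).2.1).map (LinearEquiv.ofEq _ _ (vb_spec G n).2.2)

theorem bas_apply (n : ℕ) (j : Jn G n) : ((bas G n j : Hn G n) : ℕ →₀ ℤ) = vb G n j := by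
  rw [bas, Module.Basis.map_apply, LinearEquiv.coe_ofEq_apply, Module.Basis.span_apply]

/-- the coordinates isomorphism of `Hn` -/
noncomputable def rn (n : ℕ) : Hn G n ≃ₗ[ℤ] (Jn G n →₀ ℤ) := (bas G n).repr

theorem rn_symm_apply (n : ℕ) (k : Jn G n →₀ ℤ) :
    ((rn G n).symm k : ℕ →₀ ℤ) = Finsupp.linearCombination ℤ (vb G n) k := by
  rw [rn, Module.Basis.repr_symm_apply]
  have : ((Hn G n).subtype) (Finsupp.linearCombination ℤ (⇑(bas G n)) k)
      = Finsupp.linearCombination ℤ (fun j => ((bas G n j : Hn G n) : ℕ →₀ ℤ)) k := by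
    rw [Finsupp.apply_linearCombination]
    rfl
  rw [show ((Finsupp.linearCombination ℤ (⇑(bas G n)) k : Hn G n) : ℕ →₀ ℤ)
      = ((Hn G n).subtype) (Finsupp.linearCombination ℤ (⇑(bas G n)) k) from rfl, this]
  have hfun : (fun j => ((bas G n j : Hn G n) : ℕ →₀ ℤ)) = vb G n := funext (bas_apply G n)
  rw [hfun]

theorem exists_w (n : ℕ) (j : Jn G n) :
    ∃ x, x ∈ Gn G n ∧ x n = vb G n j := by
  rcases Submodule.mem_map.1 ((vb_spec G n).1 j) with ⟨x, hx, hxn⟩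
  exact ⟨x, hx, hxn⟩

noncomputable def wit (n : ℕ) : Jn G n → (ℕ → (ℕ →₀ ℤ)) := fun j => (exists_w G n j).choose

theorem wit_mem (n : ℕ) (j : Jn G n) : wit G n j ∈ Gn G n := (exists_w G n j).choose_spec.1
theorem wit_proj (n : ℕ) (j : Jn G n) : wit G n j n = vb G n j := (exists_w G n j).choose_spec.2

/-- the section `(Jn →₀ ℤ) → Gn ⊆ ambient` -/
noncomputable def sig (n : ℕ) : (Jn G n →₀ ℤ) →ₗ[ℤ] (ℕ → (ℕ →₀ ℤ)) :=
  Finsupp.linearCombination ℤ (wit G n)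

theorem sig_mem (n : ℕ) (k : Jn G n →₀ ℤ) : sig G n k ∈ Gn G n := by
  rw [← mem_Gn']
  rw [sig, Finsupp.linearCombination_apply]
  exact Submodule.sum_mem _ (fun j _ => Submodule.smul_mem _ _ ((mem_Gn' G).2 (wit_mem G n j)))

theorem sig_proj (n : ℕ) (k : Jn G n →₀ ℤ) :
    sig G n k n = (((rn G n).symm k : Hn G n) : ℕ →₀ ℤ) := by
  rw [rn_symm_apply]
  have : sig G n k n = (LinearMap.proj n : (ℕ → (ℕ →₀ ℤ)) →ₗ[ℤ] (ℕ →₀ ℤ)) (sig G n k) := rfl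
  rw [this, sig, Finsupp.apply_linearCombination]
  have hfun : (⇑(LinearMap.proj n (R := ℤ) (φ := fun _ : ℕ => (ℕ →₀ ℤ))) ∘ wit G n) = vb G n :=
    funext (wit_proj G n)
  rw [hfun]

theorem sig_coord_eq_zero (n : ℕ) (k : Jn G n →₀ ℤ) {m : ℕ} (h : m < n) :
    sig G n k m = 0 := (sig_mem G n k).2 m h

end CSPF

namespace CSPF

variable (G : AddSubgroup (ℕ → (ℕ →₀ ℤ)))

open Classical in
noncomputable def pHn (n : ℕ) (x : ℕ → (ℕ →₀ ℤ)) : Hn G n :=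
  if h : x ∈ Gn G n then ⟨x n, Submodule.mem_map.2 ⟨x, (mem_Gn' G).2 h, rfl⟩⟩ else 0

theorem pHn_of_mem {n : ℕ} {x} (h : x ∈ Gn G n) : (pHn G n x : ℕ →₀ ℤ) = x n := by
  classical
  rw [pHn]
  rw [dif_pos h]

theorem pHn_add {n : ℕ} {x y} (hx : x ∈ Gn G n) (hy : y ∈ Gn G n) :
    pHn G n (x + y) = pHn G n x + pHn G n y := by
  apply Subtype.ext
  rw [Submodule.coe_add, pHn_of_mem G hx, pHn_of_mem G hy, pHn_of_mem G (add_mem hx hy)]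
  rfl

noncomputable def dig (n : ℕ) (x : ℕ → (ℕ →₀ ℤ)) : Jn G n →₀ ℤ := rn G n (pHn G n x)

theorem dig_add {n : ℕ} {x y} (hx : x ∈ Gn G n) (hy : y ∈ Gn G n) :
    dig G n (x + y) = dig G n x + dig G n y := by
  rw [dig, dig, dig, pHn_add G hx hy, map_add]

theorem dig_eq_zero {n : ℕ} {x} (h : x ∈ Gn G (n + 1)) : dig G n x = 0 := by
  have h' : x ∈ Gn G n := Gn_anti G (Nat.le_succ n) h
  have : pHn G n x = 0 := Subtype.ext (by rw [pHn_of_mem G h', h.2 n (Nat.lt_succ_self n)]; rfl)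
  rw [dig, this, map_zero]

noncomputable def Fse (g : ℕ → (ℕ →₀ ℤ)) : ℕ → (ℕ → (ℕ →₀ ℤ))
  | 0 => g
  | n + 1 => Fse g n - sig G n (dig G n (Fse g n))

theorem Fse_mem {g} (hg : g ∈ G) (n : ℕ) : Fse G g n ∈ Gn G n := by
  induction n with
  | zero => exact ⟨hg, fun m hm => absurd hm (Nat.not_lt_zero m)⟩
  | succ n ih =>
    refine ⟨AddSubgroup.sub_mem _ ih.1 (sig_mem G n _).1, fun m hm => ?_⟩
    rcases Nat.lt_or_ge m n with h | h
    · show Fse G g n m - sig G n (dig G n (Fse G g n)) m = 0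
      rw [ih.2 m h, sig_coord_eq_zero G n _ h, sub_zero]
    · have hmn : m = n := le_antisymm (Nat.lt_succ_iff.1 hm) h
      subst hmn
      show Fse G g m m - sig G m (dig G m (Fse G g m)) m = 0
      rw [sig_proj, dig, LinearEquiv.symm_apply_apply, pHn_of_mem G ih, sub_self]

theorem Fse_add {g g'} (hg : g ∈ G) (hg' : g' ∈ G) (n : ℕ) :
    Fse G (g + g') n = Fse G g n + Fse G g' n := by
  induction n with
  | zero => rfl
  | succ n ih =>
    show Fse G (g + g') n - _ = (Fse G g n - _) + (Fse G g' n - _)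
    rw [ih, dig_add G (Fse_mem G hg n) (Fse_mem G hg' n), map_add]
    abel

theorem Fse_partial {g} (n : ℕ) :
    g - Fse G g n = ∑ j ∈ Finset.range n, sig G j (dig G j (Fse G g j)) := by
  induction n with
  | zero => simp [Fse]
  | succ n ih =>
    rw [Finset.sum_range_succ, ← ih]
    show g - (Fse G g n - sig G n (dig G n (Fse G g n))) = _
    abel

noncomputable def Phi (k : ∀ n, Jn G n →₀ ℤ) : ℕ → (ℕ →₀ ℤ) :=
  fun i => ∑ n ∈ Finset.range (i + 1), sig G n (k n) i

theorem Phi_partial (k : ∀ n, Jn G n →₀ ℤ) {m i : ℕ} (h : i < m) :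
    Phi G k i = (∑ n ∈ Finset.range m, sig G n (k n)) i := by
  rw [Finset.sum_apply]
  exact Finset.sum_subset
    (Finset.range_subset_range.2 h)
    (fun x _ hx => sig_coord_eq_zero G x _ (by
      rcases Nat.lt_or_ge i x with h' | h'
      · exact h'
      · exact absurd (Finset.mem_range.2 (Nat.lt_succ_of_le h')) hx))

theorem Phi_mem (k : ∀ n, Jn G n →₀ ℤ) (hG : IsClosed (G : Set (ℕ → (ℕ →₀ ℤ)))) :
    Phi G k ∈ G := by
  have hS : ∀ m, (∑ n ∈ Finset.range m, sig G n (k n)) ∈ G :=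
    fun m => AddSubgroup.sum_mem _ (fun n _ => (sig_mem G n (k n)).1)
  have htend : Filter.Tendsto (fun m => ∑ n ∈ Finset.range m, sig G n (k n))
      Filter.atTop (nhds (Phi G k)) := by
    rw [tendsto_pi_nhds]
    intro i
    apply Filter.Tendsto.congr' (f₁ := fun _ => Phi G k i)
    · filter_upwards [Filter.eventually_ge_atTop (i + 1)] with m hm
      exact Phi_partial G k (Nat.lt_of_lt_of_le (Nat.lt_succ_self i) hm)
    · exact tendsto_const_nhds
  exact hG.mem_of_tendsto htend (Filter.Eventually.of_forall hS)

theorem Phi_sub_partial (k : ∀ n, Jn G n →₀ ℤ) (hG : IsClosed (G : Set (ℕ → (ℕ →₀ ℤ))))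
    (m : ℕ) : Phi G k - ∑ n ∈ Finset.range m, sig G n (k n) ∈ Gn G m := by
  refine ⟨AddSubgroup.sub_mem _ (Phi_mem G k hG)
    (AddSubgroup.sum_mem _ (fun n _ => (sig_mem G n (k n)).1)), fun i hi => ?_⟩
  show Phi G k i - (∑ n ∈ Finset.range m, sig G n (k n)) i = 0
  rw [Phi_partial G k hi, sub_self]

theorem Fse_Phi (k : ∀ n, Jn G n →₀ ℤ) (hG : IsClosed (G : Set (ℕ → (ℕ →₀ ℤ)))) (n : ℕ) :
    Fse G (Phi G k) n = Phi G k - ∑ j ∈ Finset.range n, sig G j (k j) ∧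
      dig G n (Fse G (Phi G k) n) = k n := by
  induction n with
  | zero =>
    have hA : Fse G (Phi G k) 0 = Phi G k - ∑ j ∈ Finset.range 0, sig G j (k j) := by simp [Fse]
    refine ⟨hA, ?_⟩
    rw [hA]
    have hmem := Phi_sub_partial G k hG 0
    have hcoord : (Phi G k - ∑ j ∈ Finset.range 0, sig G j (k j)) 0 = sig G 0 (k 0) 0 := by
      show Phi G k 0 - (∑ j ∈ Finset.range 0, sig G j (k j)) 0 = _
      rw [Phi_partial G k (Nat.lt_succ_self 0), Finset.sum_range_succ]
      simp
    rw [dig]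
    have hp : pHn G 0 _ = (rn G 0).symm (k 0) :=
      Subtype.ext (by rw [pHn_of_mem G hmem, hcoord, sig_proj])
    rw [hp, LinearEquiv.apply_symm_apply]
  | succ n ih =>
    have hA : Fse G (Phi G k) (n + 1)
        = Phi G k - ∑ j ∈ Finset.range (n + 1), sig G j (k j) := by
      show Fse G (Phi G k) n - sig G n (dig G n (Fse G (Phi G k) n)) = _
      rw [ih.2, ih.1, Finset.sum_range_succ]
      abel
    refine ⟨hA, ?_⟩
    rw [hA]
    have hmem := Phi_sub_partial G k hG (n + 1)
    have hcoord : (Phi G k - ∑ j ∈ Finset.range (n + 1), sig G j (k j)) (n + 1)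
        = sig G (n + 1) (k (n + 1)) (n + 1) := by
      show Phi G k (n + 1) - (∑ j ∈ Finset.range (n + 1), sig G j (k j)) (n + 1) = _
      rw [Phi_partial G k (Nat.lt_succ_self (n + 1)), Finset.sum_range_succ]
      simp
    rw [dig]
    have hp : pHn G (n + 1) _ = (rn G (n + 1)).symm (k (n + 1)) :=
      Subtype.ext (by rw [pHn_of_mem G hmem, hcoord, sig_proj])
    rw [hp, LinearEquiv.apply_symm_apply]

end CSPF

namespace CSPF

variable (G : AddSubgroup (ℕ → (ℕ →₀ ℤ)))

theorem isOpen_coordEq (y : ℕ → (ℕ →₀ ℤ)) (n : ℕ) :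
    IsOpen {x : ℕ → (ℕ →₀ ℤ) | ∀ m, m < n → x m = y m} := by
  have : {x : ℕ → (ℕ →₀ ℤ) | ∀ m, m < n → x m = y m}
      = (fun x : ℕ → (ℕ →₀ ℤ) => fun m : Fin n => x m) ⁻¹' {fun m : Fin n => y m} := by
    ext x
    constructor
    · intro hx; funext m; exact hx m m.2
    · intro hx m hm; exact congrFun hx ⟨m, hm⟩
  rw [this]
  exact (isOpen_discrete _).preimage (by continuity)

theorem Fse_of_small {h : ℕ → (ℕ →₀ ℤ)} {n : ℕ} (hh : h ∈ Gn G n) :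
    ∀ m, m ≤ n → Fse G h m = h := by
  intro m hm
  induction m with
  | zero => rfl
  | succ m ih =>
    show Fse G h m - sig G m (dig G m (Fse G h m)) = h
    rw [ih (Nat.le_of_succ_le hm), dig_eq_zero G (Gn_anti G hm hh), map_zero, sub_zero]

theorem dig_locally_const {g g0 : ℕ → (ℕ →₀ ℤ)} {n : ℕ} (hg : g ∈ G) (hg0 : g0 ∈ G)
    (hU : ∀ m, m < n + 1 → g m = g0 m) :
    dig G n (Fse G g n) = dig G n (Fse G g0 n) := by
  have hh : g - g0 ∈ Gn G (n + 1) :=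
    ⟨AddSubgroup.sub_mem _ hg hg0, fun m hm => by
      show g m - g0 m = 0
      rw [hU m hm, sub_self]⟩
  have hgeq : g = g0 + (g - g0) := by abel
  calc dig G n (Fse G g n) = dig G n (Fse G (g0 + (g - g0)) n) := by rw [← hgeq]
    _ = dig G n (Fse G g0 n + Fse G (g - g0) n) := by rw [Fse_add G hg0 hh.1]
    _ = dig G n (Fse G g0 n) + dig G n (Fse G (g - g0) n) :=
        dig_add G (Fse_mem G hg0 n) (Fse_mem G hh.1 n)
    _ = dig G n (Fse G g0 n) + dig G n (g - g0) := by
        rw [Fse_of_small G (Gn_anti G (Nat.le_succ n) hh) n (le_refl n)]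
    _ = dig G n (Fse G g0 n) := by rw [dig_eq_zero G hh, add_zero]

noncomputable def eEquiv (hG : IsClosed (G : Set (ℕ → (ℕ →₀ ℤ)))) :
    G ≃+ (∀ n, Jn G n →₀ ℤ) where
  toFun g := fun n => dig G n (Fse G (g : ℕ → (ℕ →₀ ℤ)) n)
  invFun k := ⟨Phi G k, Phi_mem G k hG⟩
  left_inv := by
    rintro ⟨g, hg⟩
    apply Subtype.ext
    funext i
    show Phi G (fun n => dig G n (Fse G g n)) i = g i
    have h1 : Phi G (fun n => dig G n (Fse G g n)) i
        = (∑ n ∈ Finset.range (i + 1), sig G n (dig G n (Fse G g n))) i := by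
      rw [Phi, Finset.sum_apply]
    rw [h1, ← Fse_partial G (i + 1)]
    show g i - Fse G g (i + 1) i = g i
    rw [(Fse_mem G hg (i + 1)).2 i (Nat.lt_succ_self i), sub_zero]
  right_inv := by
    intro k
    funext n
    exact (Fse_Phi G k hG n).2
  map_add' := by
    rintro ⟨g, hg⟩ ⟨g', hg'⟩
    funext n
    show dig G n (Fse G (g + g') n) = _
    rw [Fse_add G hg hg', dig_add G (Fse_mem G hg n) (Fse_mem G hg' n)]
    rfl

theorem eEquiv_continuous (hG : IsClosed (G : Set (ℕ → (ℕ →₀ ℤ)))) :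
    Continuous (eEquiv G hG) := by
  apply continuous_pi
  intro n
  rw [continuous_discrete_rng]
  intro b
  rw [isOpen_iff_forall_mem_open]
  rintro ⟨g0, hg0⟩ hb
  refine ⟨Subtype.val ⁻¹' {x | ∀ m, m < n + 1 → x m = g0 m}, ?_, ?_, ?_⟩
  · rintro ⟨g, hg⟩ hgU
    have : dig G n (Fse G g n) = dig G n (Fse G g0 n) :=
      dig_locally_const G hg hg0 hgU
    simp only [Set.mem_preimage, Set.mem_singleton_iff] at hb ⊢
    show dig G n (Fse G g n) = b
    rw [this]
    exact hb
  · exact (isOpen_coordEq g0 (n + 1)).preimage continuous_subtype_val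
  · intro m _; rfl

theorem eEquiv_symm_continuous (hG : IsClosed (G : Set (ℕ → (ℕ →₀ ℤ)))) :
    Continuous (eEquiv G hG).symm := by
  apply Continuous.subtype_mk
  apply continuous_pi
  intro i
  show Continuous fun k : ∀ n, Jn G n →₀ ℤ => ∑ n ∈ Finset.range (i + 1), sig G n (k n) i
  apply continuous_finset_sum
  intro n _
  exact (continuous_of_discreteTopology
    (f := fun y : Jn G n →₀ ℤ => sig G n y i)).comp (continuous_apply n)

end CSPF

namespace Stage2

open Classical in
theorem _dummy : True := trivial

variable (J : ℕ → Set ℕ)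

noncomputable local instance (p : ℕ → Prop) : DecidablePred p := Classical.decPred p

def Sfin : Set ℕ := {n | (J n).Finite}

noncomputable def eSplit :
    (∀ n, J n →₀ ℤ) ≃+ (∀ n : Sfin J, J (n : ℕ) →₀ ℤ) × (∀ n : ↥(Sfin J)ᶜ, J (n : ℕ) →₀ ℤ) where
  toEquiv := Equiv.piEquivPiSubtypeProd (fun n => n ∈ Sfin J) (fun n => J n →₀ ℤ)
  map_add' f g := rfl

theorem eSplit_continuous : Continuous (eSplit J) :=
  (Homeomorph.piEquivPiSubtypeProd (fun n => n ∈ Sfin J) (fun n => J n →₀ ℤ)).continuous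

theorem eSplit_symm_continuous : Continuous (eSplit J).symm :=
  (Homeomorph.piEquivPiSubtypeProd (fun n => n ∈ Sfin J) (fun n => J n →₀ ℤ)).symm.continuous

noncomputable def eA :
    (∀ n : Sfin J, J (n : ℕ) →₀ ℤ) ≃+ ((Σ n : Sfin J, J (n : ℕ)) → ℤ) where
  toFun f := fun p => f p.1 p.2
  invFun g := fun n =>
    haveI := n.2.to_subtype
    Finsupp.equivFunOnFinite.symm (fun j => g ⟨n, j⟩)
  left_inv f := by
    funext n
    haveI := n.2.to_subtype
    exact Finsupp.equivFunOnFinite_symm_coe (f n)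
  right_inv g := by
    funext p
    haveI := p.1.2.to_subtype
    exact congrFun (Finsupp.equivFunOnFinite.apply_symm_apply (fun j => g ⟨p.1, j⟩)) p.2
  map_add' f g := by
    funext p
    simp [Finsupp.add_apply]

theorem eA_continuous : Continuous (eA J) := by
  apply continuous_pi
  intro p
  exact (continuous_of_discreteTopology
    (f := fun y : (J (p.1 : ℕ) →₀ ℤ) => y p.2)).comp (continuous_apply p.1)

theorem eA_symm_continuous : Continuous (eA J).symm := by
  apply continuous_pi
  intro n
  haveI := n.2.to_subtype
  have h1 : Continuous fun g : (Σ n : Sfin J, J (n : ℕ)) → ℤ =>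
      (fun j : J (n : ℕ) => g ⟨n, j⟩) := by
    apply continuous_pi
    intro j
    exact continuous_apply _
  exact (continuous_of_discreteTopology
    (f := fun y : (J (n : ℕ) → ℤ) => Finsupp.equivFunOnFinite.symm y)).comp h1

noncomputable def enum (n : ↥(Sfin J)ᶜ) : J (n : ℕ) ≃ ℕ := by
  haveI : Infinite (J (n : ℕ)) := Set.infinite_coe_iff.2 n.2
  exact (Classical.choice (nonempty_denumerable _)).eqv

noncomputable def eB :
    (∀ n : ↥(Sfin J)ᶜ, J (n : ℕ) →₀ ℤ) ≃+ (↥(Sfin J)ᶜ → (ℕ →₀ ℤ)) :=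
  AddEquiv.piCongrRight (fun n => (Finsupp.domCongr (enum J n)))

theorem eB_continuous : Continuous (eB J) := by
  apply continuous_pi
  intro n
  exact (continuous_of_discreteTopology
    (f := fun y : (J (n : ℕ) →₀ ℤ) => Finsupp.domCongr (M := ℤ) (enum J n) y)).comp
    (continuous_apply n)

theorem eB_symm_continuous : Continuous (eB J).symm := by
  apply continuous_pi
  intro n
  exact (continuous_of_discreteTopology
    (f := fun y : (ℕ →₀ ℤ) => (Finsupp.domCongr (M := ℤ) (enum J n)).symm y)).comp
    (continuous_apply n)

end Stage2

theorem aux_main (G : AddSubgroup (ℕ → (ℕ →₀ ℤ))) (hG : IsClosed (G : Set (ℕ → (ℕ →₀ ℤ)))) :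
    ∃ (ι κ : Type) (_ : Countable ι) (_ : Countable κ)
      (e : G ≃+ ((ι → ℤ) × (κ → (ℕ →₀ ℤ)))), Continuous e ∧ Continuous e.symm := by
  refine ⟨(Σ n : Stage2.Sfin (CSPF.Jn G), (CSPF.Jn G (n : ℕ))), ↥(Stage2.Sfin (CSPF.Jn G))ᶜ,
    inferInstance, inferInstance,
    (CSPF.eEquiv G hG).trans ((Stage2.eSplit _).trans
      (AddEquiv.prodCongr (Stage2.eA _) (Stage2.eB _))), ?_, ?_⟩
  · exact ((Stage2.eA_continuous _).prodMap (Stage2.eB_continuous _)).comp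
      ((Stage2.eSplit_continuous _).comp (CSPF.eEquiv_continuous G hG))
  · exact (CSPF.eEquiv_symm_continuous G hG).comp ((Stage2.eSplit_symm_continuous _).comp
      ((Stage2.eA_symm_continuous _).prodMap (Stage2.eB_symm_continuous _)))


/-- Every closed subgroup `G` of `(ℤ^(ω))^ω` is topologically isomorphic to
`ℤ^α × (ℤ^(ω))^β` for some `α, β ≤ ω` (encoded as powers indexed by countable types). -/
theorem closed_subgroup_of_product_of_free
    (G : AddSubgroup (ℕ → ZOmega)) (hG : IsClosed (G : Set (ℕ → ZOmega))) :
    ∃ (ι κ : Type) (_ : Countable ι) (_ : Countable κ)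
      (e : G ≃+ ((ι → ℤ) × (κ → ZOmega))), Continuous e ∧ Continuous e.symm := by
  exact aux_main G hG
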